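/- Let G be a tree on n≥3 vertices and let η>0. Then for every positive definite matrix A with zeros at the non-edges of G, the matrix B defined by b_{ij}=a_{ij} if |a_{ij}|>η or i=j, and b_{ij}=0 otherwise, is positive definite. -/

import Mathlib

open Matrix


/-- If `G` is a tree on `n ≥ 3` vertices and `η > 0`, then hard-thresholding any
positive definite matrix with zeros at the non-edges of `G` at level `η` yields a
positive definite matrix. -/
theorem stmt_14 {n : ℕ} (hn : 3 ≤ n) (G : SimpleGraph (Fin n)) [DecidableRel G.Adj]
    (htree : G.IsTree) (η : ℝ) (hη : 0 < η)
    (A : Matrix (Fin n) (Fin n) ℝ) (hA : A.PosDef)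
    (hzeros : ∀ i j : Fin n, i ≠ j → ¬ G.Adj i j → A i j = 0)
    (B : Matrix (Fin n) (Fin n) ℝ)
    (hB : ∀ i j : Fin n, B i j = if i = j ∨ η < |A i j| then A i j else 0) :
    B.PosDef := by
  classical
  -- symmetry of A
  have hsymm : ∀ i j : Fin n, A j i = A i j := by
    intro i j
    simpa using hA.isHermitian.apply i j
  -- the graph of kept edges
  let G' : SimpleGraph (Fin n) :=
    { Adj := fun i j => G.Adj i j ∧ η < |A i j|
      symm := by
        refine ⟨?_⟩; intro i j ⟨h1, h2⟩
        exact ⟨h1.symm, by rwa [hsymm i j]⟩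
      loopless := ⟨fun i h => G.loopless.irrefl i h.1⟩ }
  -- removed edges disconnect their endpoints in G'
  have hbridge : ∀ i j : Fin n, G.Adj i j → ¬ η < |A i j| → ¬ G'.Reachable i j := by
    intro i j hadj hsmall hreach
    have hb : G.IsBridge s(i, j) :=
      (SimpleGraph.isAcyclic_iff_forall_adj_isBridge.mp htree.IsAcyclic) hadj
    have hle : G' ≤ G \ SimpleGraph.fromEdgeSet {s(i, j)} := by
      intro a b ⟨hab, habs⟩
      refine ⟨hab, ?_⟩
      simp only [SimpleGraph.fromEdgeSet_adj, Set.mem_singleton_iff]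
      rintro ⟨he, -⟩
      rcases Sym2.eq_iff.mp he with ⟨rfl, rfl⟩ | ⟨rfl, rfl⟩
      · exact hsmall habs
      · exact hsmall (by rwa [hsymm] at habs)
    exact (SimpleGraph.isBridge_iff.mp hb) (hreach.mono hle)
  -- B agrees with A within connected components of G', vanishes across
  have hFA : ∀ i j : Fin n, B i j =
      if G'.connectedComponentMk i = G'.connectedComponentMk j then A i j else 0 := by
    intro i j
    by_cases hcc : G'.connectedComponentMk i = G'.connectedComponentMk j
    · rw [if_pos hcc]
      have hreach : G'.Reachable i j := SimpleGraph.ConnectedComponent.exact hcc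
      by_cases hij : i = j
      · rw [hB]; simp [hij]
      · by_cases hadj : G.Adj i j
        · by_cases hbig : η < |A i j|
          · rw [hB, if_pos (Or.inr hbig)]
          · exact absurd hreach (hbridge i j hadj hbig)
        · have h0 : A i j = 0 := hzeros i j hij hadj
          rw [hB]
          by_cases hbig : η < |A i j|
          · rw [if_pos (Or.inr hbig)]
          · rw [if_neg (by tauto), h0]
    · rw [if_neg hcc, hB]
      have hij : i ≠ j := by rintro rfl; exact hcc rfl
      by_cases hbig : η < |A i j|
      · exfalso
        have hA0 : A i j ≠ 0 := by
          intro h; rw [h] at hbig; simp at hbig; linarith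
        have hadj : G.Adj i j := by
          by_contra h; exact hA0 (hzeros i j hij h)
        exact hcc (SimpleGraph.ConnectedComponent.sound ⟨SimpleGraph.Walk.cons ⟨hadj, hbig⟩ SimpleGraph.Walk.nil⟩)
      · rw [if_neg (by tauto)]
  -- Hermitian
  have hherm : B.IsHermitian := by
    ext i j
    simp only [Matrix.conjTranspose_apply, star_trivial]
    rw [hFA i j, hFA j i, hsymm i j]
    by_cases hcc : G'.connectedComponentMk i = G'.connectedComponentMk j
    · rw [if_pos hcc, if_pos hcc.symm]
    · rw [if_neg hcc, if_neg (fun h => hcc h.symm)]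
  refine Matrix.posDef_iff_dotProduct_mulVec.mpr ⟨hherm, ?_⟩
  intro x hx
  -- decompose x over connected components
  let cc : Fin n → G'.ConnectedComponent := G'.connectedComponentMk
  let xC : G'.ConnectedComponent → (Fin n → ℝ) := fun C j => if cc j = C then x j else 0
  have key : ∑ C : G'.ConnectedComponent, dotProduct (star (xC C)) (A *ᵥ (xC C)) =
      dotProduct (star x) (B *ᵥ x) := by
    simp only [dotProduct, Matrix.mulVec, Pi.star_apply, star_trivial, Finset.mul_sum]
    rw [Finset.sum_comm]
    refine Finset.sum_congr rfl fun i _ => ?_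
    rw [Finset.sum_comm]
    refine Finset.sum_congr rfl fun j _ => ?_
    rw [hFA i j]
    rw [Finset.sum_eq_single (cc i)]
    · simp only [xC, if_pos rfl]
      by_cases h : cc i = cc j
      · rw [if_pos h.symm, if_pos h]
      · rw [if_neg (fun hh => h hh.symm), if_neg h]
        ring
    · intro b _ hb
      simp only [xC, if_neg (fun hh : cc i = b => hb hh.symm)]
      ring
    · intro h
      exact absurd (Finset.mem_univ _) h
  rw [← key]
  -- each summand is nonneg; one is positive
  have hnonneg : ∀ C ∈ Finset.univ, (0:ℝ) ≤ dotProduct (star (xC C)) (A *ᵥ (xC C)) := by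
    intro C _
    have := hA.posSemidef.dotProduct_mulVec_nonneg (xC C)
    simpa using this
  obtain ⟨i₀, hi₀⟩ : ∃ i, x i ≠ 0 := Function.ne_iff.mp hx
  have hpos : (0:ℝ) < dotProduct (star (xC (cc i₀))) (A *ᵥ (xC (cc i₀)))  := by
    apply hA.dotProduct_mulVec_pos
    intro h
    have : xC (cc i₀) i₀ = 0 := by rw [h]; rfl
    simp only [xC, if_pos rfl] at this
    exact hi₀ this
  exact Finset.sum_pos' hnonneg ⟨cc i₀, Finset.mem_univ _, hpos⟩
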